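/- Let X ⊆ ℝ^n be nonempty, closed, convex, with diameter at most D. Let α > 0, B > 0, L ≥ 0, integers N ≥ 1 and s ≥ 1, points x_l(v) ∈ X for l ∈ {1,…,s} and v ∈ {1,…,N}, and vectors w, g ∈ ℝ^n with ‖g‖₂ ≤ B·L. Define ψ_s(x) = (αB/(2N))·Σ_{l=1}^{s−1} Σ_{v=1}^N ‖x − x_l(v)‖₂² and ψ_{s+1}(x) = (αB/(2N))·Σ_{l=1}^{s} Σ_{v=1}^N ‖x − x_l(v)‖₂², and let x̃_s = argmin_{x∈X} {⟨w, x⟩ + ψ_s(x)} and x̃_{s+1} = argmin_{x∈X} {⟨w + g, x⟩ + ψ_{s+1}(x)}. Then ‖x̃_s − x̃_{s+1}‖₂ ≤ 2L/(α(2s−1)) + 2D/(2s−1). -/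

import Mathlib

open Finset
open scoped RealInnerProductSpace

lemma aux_foc {E : Type*} [NormedAddCommGroup E] [InnerProductSpace ℝ E]
    (X : Set E) (hXconv : Convex ℝ X) (x y : E) (hx : x ∈ X) (hy : y ∈ X)
    (w : E) (c : ℝ) (hc : 0 ≤ c) {ι : Type*} (Sf : Finset ι) (a : ι → E)
    (hopt : ∀ p ∈ X, ⟪w, x⟫ + c * ∑ i ∈ Sf, ‖x - a i‖ ^ 2 ≤
        ⟪w, p⟫ + c * ∑ i ∈ Sf, ‖p - a i‖ ^ 2) :
    0 ≤ ⟪w, y - x⟫ + 2 * c * ∑ i ∈ Sf, ⟪x - a i, y - x⟫ := by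
  set v := y - x with hv
  set A := ⟪w, v⟫ + 2 * c * ∑ i ∈ Sf, ⟪x - a i, v⟫ with hA
  set C := c * Sf.card * ‖v‖ ^ 2 with hC
  have hC0 : 0 ≤ C := by positivity
  have key : ∀ r : ℝ, 0 < r → r ≤ 1 → 0 ≤ A + C * r := by
    intro r hr hr1
    have hp : x + r • v ∈ X := by
      have h := hXconv hx hy (by linarith : (0:ℝ) ≤ 1 - r) hr.le (by ring)
      have : (1 - r) • x + r • y = x + r • v := by
        rw [hv]; module
      rwa [this] at h
    have h := hopt _ hp
    have hlin : ⟪w, x + r • v⟫ = ⟪w, x⟫ + r * ⟪w, v⟫ := by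
      rw [inner_add_right, real_inner_smul_right]
    have hquad : ∀ i, ‖x + r • v - a i‖ ^ 2
        = ‖x - a i‖ ^ 2 + 2 * (r * ⟪x - a i, v⟫) + r ^ 2 * ‖v‖ ^ 2 := by
      intro i
      have : x + r • v - a i = (x - a i) + r • v := by abel
      rw [this, norm_add_sq_real, real_inner_smul_right, norm_smul]
      simp only [mul_pow, Real.norm_eq_abs, sq_abs]
    rw [hlin] at h
    simp only [hquad, Finset.sum_add_distrib, Finset.sum_const, nsmul_eq_mul] at h
    have hsum : ∑ i ∈ Sf, 2 * (r * ⟪x - a i, v⟫) = 2 * r * ∑ i ∈ Sf, ⟪x - a i, v⟫ := by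
      rw [Finset.mul_sum]
      exact Finset.sum_congr rfl fun i _ => by ring
    rw [hsum] at h
    have h3 : 0 ≤ r * (A + C * r) := by
      rw [hA, hC]; nlinarith [h]
    by_contra hneg
    push_neg at hneg
    nlinarith [h3]
  by_contra hA'
  push_neg at hA'
  have h1 : 0 < -A := by linarith
  set r := min 1 (-A / (C + 1)) with hrdef
  have hr0 : 0 < r := lt_min one_pos (by positivity)
  have hr1 : r ≤ 1 := min_le_left _ _
  have hr2 : r ≤ -A / (C + 1) := min_le_right _ _
  have := key r hr0 hr1
  have hCr : C * r ≤ C * (-A / (C + 1)) := mul_le_mul_of_nonneg_left hr2 hC0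
  have : C * (-A / (C + 1)) < -A := by
    rw [mul_div_assoc']
    rw [div_lt_iff₀ (by linarith)]
    nlinarith
  linarith

set_option maxHeartbeats 1000000 in
/-- stability of consecutive FTRL iterates with proximal
strongly convex regularizers. -/
theorem stmt_19 (n N s : ℕ) (hN : 1 ≤ N) (hs : 1 ≤ s)
    (X : Set (EuclideanSpace ℝ (Fin n))) (D α B L : ℝ)
    (hXne : X.Nonempty) (hXcl : IsClosed X) (hXconv : Convex ℝ X)
    (hD : ∀ x ∈ X, ∀ y ∈ X, ‖x - y‖ ≤ D)
    (hα : 0 < α) (hB : 0 < B) (hL : 0 ≤ L)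
    (xl : ℕ → Fin N → EuclideanSpace ℝ (Fin n))
    (hxl : ∀ l ∈ Finset.Icc 1 s, ∀ v, xl l v ∈ X)
    (w g : EuclideanSpace ℝ (Fin n)) (hg : ‖g‖ ≤ B * L)
    (xs xs1 : EuclideanSpace ℝ (Fin n))
    (hxsX : xs ∈ X)
    (hxs : ∀ p ∈ X,
      ⟪w, xs⟫ + α * B / (2 * N) * ∑ l ∈ Finset.Icc 1 (s - 1), ∑ v, ‖xs - xl l v‖ ^ 2 ≤
        ⟪w, p⟫ + α * B / (2 * N) * ∑ l ∈ Finset.Icc 1 (s - 1), ∑ v, ‖p - xl l v‖ ^ 2)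
    (hxs1X : xs1 ∈ X)
    (hxs1 : ∀ p ∈ X,
      ⟪w + g, xs1⟫ + α * B / (2 * N) * ∑ l ∈ Finset.Icc 1 s, ∑ v, ‖xs1 - xl l v‖ ^ 2 ≤
        ⟪w + g, p⟫ + α * B / (2 * N) * ∑ l ∈ Finset.Icc 1 s, ∑ v, ‖p - xl l v‖ ^ 2) :
    ‖xs - xs1‖ ≤ 2 * L / (α * (2 * s - 1)) + 2 * D / (2 * s - 1) := by
  obtain ⟨t, rfl⟩ : ∃ t, s = t + 1 := ⟨s - 1, (Nat.succ_pred_eq_of_pos hs).symm⟩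
  have hN0 : (0:ℝ) < N := by exact_mod_cast hN
  set c : ℝ := α * B / (2 * N) with hc
  have hc0 : 0 < c := by positivity
  have hD0 : 0 ≤ D := by have := hD xs hxsX xs hxsX; simpa using this
  set nd : ℝ := ‖xs - xs1‖ with hnd
  have hnd0 : 0 ≤ nd := norm_nonneg _
  -- first-order optimality conditions
  have h1 := aux_foc X hXconv xs xs1 hxsX hxs1X w c hc0.le
      ((Finset.Icc 1 t) ×ˢ Finset.univ) (fun p => xl p.1 p.2)
      (fun p hp => by simpa [Finset.sum_product, Nat.add_sub_cancel] using hxs p hp)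
  have h2 := aux_foc X hXconv xs1 xs hxs1X hxsX (w + g) c hc0.le
      ((Finset.Icc 1 (t + 1)) ×ˢ Finset.univ) (fun p => xl p.1 p.2)
      (fun p hp => by simpa [Finset.sum_product] using hxs1 p hp)
  simp only [Finset.sum_product] at h1 h2
  rw [Finset.sum_Icc_succ_top (Nat.le_add_left 1 t)
      (fun l => ∑ v : Fin N, ⟪xs1 - xl l v, xs - xs1⟫)] at h2
  set S1 : ℝ := ∑ l ∈ Finset.Icc 1 t, ∑ v : Fin N, ⟪xs - xl l v, xs1 - xs⟫ with hS1def
  set S2 : ℝ := ∑ l ∈ Finset.Icc 1 t, ∑ v : Fin N, ⟪xs1 - xl l v, xs - xs1⟫ with hS2def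
  set S3 : ℝ := ∑ v : Fin N, ⟪xs1 - xl (t + 1) v, xs - xs1⟫ with hS3def
  -- pairing identity
  have hterm : ∀ a : EuclideanSpace ℝ (Fin n),
      ⟪xs - a, xs1 - xs⟫ + ⟪xs1 - a, xs - xs1⟫ = -nd ^ 2 := by
    intro a
    have h := real_inner_self_eq_norm_sq (xs - xs1)
    simp only [inner_sub_left, inner_sub_right] at h ⊢
    rw [hnd]
    linarith [real_inner_comm xs xs1, real_inner_comm xs a, real_inner_comm xs1 a]
  have hsum12 : S1 + S2 = -((t : ℝ) * N * nd ^ 2) := by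
    rw [hS1def, hS2def, ← Finset.sum_add_distrib]
    rw [Finset.sum_congr rfl (fun l _ => (Finset.sum_add_distrib).symm)]
    simp only [hterm, Finset.sum_const, Finset.card_univ, Fintype.card_fin,
      Nat.card_Icc, Nat.add_sub_cancel, nsmul_eq_mul, smul_eq_mul]
    push_cast
    ring
  -- bound on S3
  have hS3 : S3 ≤ N * (D * nd - nd ^ 2) := by
    have hb : ∀ v : Fin N, ⟪xs1 - xl (t + 1) v, xs - xs1⟫ ≤ D * nd - nd ^ 2 := by
      intro v
      have hmem : xl (t + 1) v ∈ X := hxl (t + 1) (by simp) v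
      have e : ⟪xs1 - xl (t + 1) v, xs - xs1⟫
          = ⟪xs - xl (t + 1) v, xs - xs1⟫ - ‖xs - xs1‖ ^ 2 := by
        rw [show xs1 - xl (t + 1) v = (xs - xl (t + 1) v) - (xs - xs1) by abel,
          inner_sub_left, real_inner_self_eq_norm_sq]
      rw [e, ← hnd]
      have hi := real_inner_le_norm (xs - xl (t + 1) v) (xs - xs1)
      have hdd := hD xs hxsX (xl (t + 1) v) hmem
      rw [← hnd] at hi
      nlinarith [hnd0]
    calc S3 ≤ ∑ _v : Fin N, (D * nd - nd ^ 2) := Finset.sum_le_sum (fun v _ => hb v)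
      _ = N * (D * nd - nd ^ 2) := by
          simp [Finset.sum_const, Finset.card_univ, Fintype.card_fin]; ring
  -- inner product rewrites
  have e1 : ⟪w, xs1 - xs⟫ = -⟪w, xs - xs1⟫ := by
    rw [show xs1 - xs = -(xs - xs1) by abel, inner_neg_right]
  have e2 : ⟪w + g, xs - xs1⟫ = ⟪w, xs - xs1⟫ + ⟪g, xs - xs1⟫ := inner_add_left _ _ _
  rw [e1] at h1
  rw [e2] at h2
  have hG : ⟪g, xs - xs1⟫ ≤ B * L * nd := by
    have hi := real_inner_le_norm g (xs - xs1)
    rw [← hnd] at hi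
    nlinarith [hnd0]
  -- combine
  have h12 : 0 ≤ ⟪g, xs - xs1⟫ + 2 * c * (S1 + S2) + 2 * c * S3 := by nlinarith [h1, h2]
  rw [hsum12] at h12
  have hS3' : 2 * c * S3 ≤ 2 * c * (N * (D * nd - nd ^ 2)) :=
    mul_le_mul_of_nonneg_left hS3 (by positivity)
  -- clear c
  have e3 : 2 * c * ((t : ℝ) * N * nd ^ 2) = α * B * ((t : ℝ) * nd ^ 2) := by
    rw [hc]; field_simp
  have e4 : 2 * c * (N * (D * nd - nd ^ 2)) = α * B * (D * nd - nd ^ 2) := by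
    rw [hc]; field_simp
  have hfin : α * B * (((t : ℝ) + 1) * nd ^ 2) ≤ B * L * nd + α * B * (D * nd) := by
    linarith [h12, hS3', hG, e3, e4]
  -- divide by B and finish
  have hdiv : α * ((t : ℝ) + 1) * nd ≤ L + α * D := by
    rcases eq_or_lt_of_le hnd0 with h0 | h0
    · rw [← h0, mul_zero]
      have h9 : 0 ≤ α * D := mul_nonneg hα.le hD0
      linarith
    · have h := hfin
      rw [show α * B * (((t : ℝ) + 1) * nd ^ 2) = (B * nd) * (α * ((t : ℝ) + 1) * nd) by ring,
        show B * L * nd + α * B * (D * nd) = (B * nd) * (L + α * D) by ring] at h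
      exact le_of_mul_le_mul_left h (by positivity)
  push_cast
  have hden : (0:ℝ) < 2 * ((t : ℝ) + 1) - 1 := by
    have : (0:ℝ) ≤ t := Nat.cast_nonneg t
    linarith
  have hαden : (0:ℝ) < α * (2 * ((t : ℝ) + 1) - 1) := mul_pos hα hden
  rw [show 2 * L / (α * (2 * ((t : ℝ) + 1) - 1)) + 2 * D / (2 * ((t : ℝ) + 1) - 1)
      = (2 * L + 2 * α * D) / (α * (2 * ((t : ℝ) + 1) - 1)) by
        field_simp]
  rw [le_div_iff₀ hαden]
  nlinarith [hdiv, mul_nonneg hα.le hnd0]
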